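/- Let 0 < γ < 1 and let (p_n)_{n≥0} be real coefficients satisfying |p_n| ≤ C K^n for some C, K > 0, and define f(τ) = Σ_{n=0}^∞ p_n τ^{nγ}/Γ(nγ+1) for τ ≥ 0. Then for every n ∈ ℕ, the n-fold iterated Caputo derivative D^{nγ} f exists on (0,∞), equals Σ_{k=0}^∞ p_{n+k} τ^{kγ}/Γ(kγ+1), and its limit as τ → 0⁺ equals p_n. -/

import Mathlib

open MeasureTheory Real Filter

/-- Caputo fractional derivative of order `γ` of a function `f : [0,∞) → ℝ`
(modelled as `f : ℝ → ℝ`, with the derivative taken within `[0,∞)`):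
`D^γ f(τ) = (1/Γ(1−γ)) ∫₀^τ f'(ρ) (τ−ρ)^{−γ} dρ`. -/
noncomputable def caputo (γ : ℝ) (f : ℝ → ℝ) (τ : ℝ) : ℝ :=
  (1 / Real.Gamma (1 - γ)) *
    ∫ ρ in (0:ℝ)..τ, derivWithin f (Set.Ici 0) ρ * (τ - ρ) ^ (-γ)


private lemma fact_ge_aux (R : ℕ) (hR : 1 ≤ R) :
    ∀ m : ℕ, (Nat.factorial R : ℝ) * (R : ℝ) ^ m ≤ (Nat.factorial (R+m) : ℝ) := by
  intro m
  induction m with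
  | zero => simp
  | succ m ih =>
    have h1 : (R : ℝ) ≤ ((R + m + 1 : ℕ) : ℝ) := by push_cast; linarith
    calc (Nat.factorial R : ℝ) * (R : ℝ) ^ (m + 1) = (Nat.factorial R : ℝ) * (R : ℝ) ^ m * R := by ring
    _ ≤ (Nat.factorial (R+m) : ℝ) * ((R + m + 1 : ℕ) : ℝ) := by
        apply mul_le_mul ih h1 (by positivity) (by positivity)
    _ = (Nat.factorial (R+(m+1)) : ℝ) := by
        rw [show R + (m+1) = (R + m) + 1 by ring, Nat.factorial_succ]
        push_cast; ring

private lemma gamma_arg_pos (γ : ℝ) (hγ0 : 0 < γ) (k : ℕ) : 0 < Real.Gamma ((k : ℝ) * γ + 1) :=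
  Real.Gamma_pos_of_pos (by positivity)

private lemma ml_summable (γ : ℝ) (hγ0 : 0 < γ) (x : ℝ) (hx : 0 ≤ x) :
    Summable (fun k : ℕ => x ^ k / Real.Gamma ((k : ℝ) * γ + 1)) := by
  -- choose R with x ≤ R^γ / 2
  obtain ⟨R, hR1, hRx⟩ : ∃ R : ℕ, 1 ≤ R ∧ x ≤ (R : ℝ) ^ (γ : ℝ) / 2 := by
    refine ⟨⌈(2*x+1) ^ (1/γ)⌉₊ + 1, Nat.le_add_left 1 _, ?_⟩
    have h0 : (0:ℝ) ≤ 2*x+1 := by linarith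
    have hbase : (2*x+1) ^ (1/γ) ≤ ((⌈(2*x+1) ^ (1/γ)⌉₊ + 1 : ℕ) : ℝ) := by
      push_cast
      have := Nat.le_ceil ((2*x+1) ^ (1/γ))
      linarith
    have := Real.rpow_le_rpow (by positivity) hbase hγ0.le
    rw [← Real.rpow_mul h0, one_div_mul_cancel hγ0.ne', Real.rpow_one] at this
    linarith
  set k0 : ℕ := ⌈((R:ℝ)+2)/γ⌉₊ with hk0
  have hbound : ∀ k : ℕ, k0 ≤ k →
      x ^ k / Real.Gamma ((k : ℝ) * γ + 1)
        ≤ ((R:ℝ) ^ (R+1) / Nat.factorial R) * (1/2) ^ k := by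
    intro k hk
    have hRpos : (0:ℝ) < R := by exact_mod_cast hR1
    have hkγ : (R:ℝ) + 2 ≤ (k:ℝ) * γ := by
      have h1 : ((R:ℝ)+2)/γ ≤ (k0 : ℝ) := Nat.le_ceil _
      have h2 : (k0 : ℝ) ≤ (k : ℝ) := by exact_mod_cast hk
      rw [div_le_iff₀ hγ0] at h1
      nlinarith
    set n : ℕ := ⌊(k:ℝ) * γ⌋₊ with hn
    have hkγ0 : (0:ℝ) ≤ (k:ℝ) * γ := by positivity
    have hnle : (n : ℝ) ≤ (k:ℝ) * γ := Nat.floor_le hkγ0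
    have hngt : (k:ℝ) * γ - 1 < n := by
      have := Nat.sub_one_lt_floor ((k:ℝ)*γ)
      exact_mod_cast this
    have hnR : R + 1 ≤ n := by
      have : (R:ℝ) + 1 ≤ (n:ℝ) := by linarith
      exact_mod_cast this
    -- Gamma monotonicity
    have hΓ1 : Real.Gamma ((n:ℝ) + 1) ≤ Real.Gamma ((k:ℝ) * γ + 1) := by
      apply Real.Gamma_strictMonoOn_Ici.monotoneOn
      · simp only [Set.mem_Ici]
        have : (R:ℝ) + 1 ≤ (n:ℝ) := by exact_mod_cast hnR
        linarith
      · simp only [Set.mem_Ici]; linarith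
      · linarith
    have hΓ2 : Real.Gamma ((n:ℝ) + 1) = Nat.factorial n := by
      exact_mod_cast Real.Gamma_nat_eq_factorial n
    -- factorial lower bound
    have hfac : (Nat.factorial R : ℝ) * (R : ℝ) ^ (n - R) ≤ (Nat.factorial n : ℝ) := by
      have := fact_ge_aux R hR1 (n - R)
      rwa [show R + (n - R) = n by omega] at this
    -- pass to rpow
    have hrpow : (R:ℝ) ^ ((k:ℝ)*γ - 1 - R) ≤ (R : ℝ) ^ (n - R : ℕ) := by
      rw [← Real.rpow_natCast (R:ℝ) (n - R)]
      apply Real.rpow_le_rpow_of_exponent_le (by exact_mod_cast hR1)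
      have : ((n - R : ℕ) : ℝ) = (n:ℝ) - R := by
        have : (R:ℝ) ≤ n := by exact_mod_cast (by omega : R ≤ n)
        push_cast [Nat.cast_sub (by omega : R ≤ n)]; ring
      rw [this]; linarith
    have hΓge : (Nat.factorial R : ℝ) * (R:ℝ) ^ ((k:ℝ)*γ - 1 - R) ≤ Real.Gamma ((k:ℝ)*γ+1) := by
      calc (Nat.factorial R : ℝ) * (R:ℝ) ^ ((k:ℝ)*γ - 1 - R)
        ≤ (Nat.factorial R : ℝ) * (R : ℝ) ^ (n - R : ℕ) :=
          mul_le_mul_of_nonneg_left hrpow (by positivity)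
      _ ≤ (Nat.factorial n : ℝ) := hfac
      _ = Real.Gamma ((n:ℝ) + 1) := hΓ2.symm
      _ ≤ _ := hΓ1
    have hΓpos := gamma_arg_pos γ hγ0 k
    have hlhspos : (0:ℝ) < (Nat.factorial R : ℝ) * (R:ℝ) ^ ((k:ℝ)*γ - 1 - R) := by positivity
    calc x ^ k / Real.Gamma ((k : ℝ) * γ + 1)
        ≤ x ^ k / ((Nat.factorial R : ℝ) * (R:ℝ) ^ ((k:ℝ)*γ - 1 - R)) := by
          exact div_le_div_of_nonneg_left (by positivity) hlhspos hΓge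
      _ = ((R:ℝ) ^ (R+1) / Nat.factorial R) * (x / (R:ℝ)^(γ:ℝ)) ^ k := by
          have e1 : (R:ℝ) ^ ((k:ℝ)*γ) = ((R:ℝ)^(γ:ℝ)) ^ k := by
            rw [mul_comm, Real.rpow_mul_natCast hRpos.le]
          have e2 : (R:ℝ) ^ ((k:ℝ)*γ - 1 - R) = (R:ℝ) ^ ((k:ℝ)*γ) / (R:ℝ) ^ (R+1) := by
            rw [show (k:ℝ)*γ - 1 - R = (k:ℝ)*γ - ((R:ℕ)+1 : ℝ) by push_cast; ring,
              Real.rpow_sub hRpos, ← Real.rpow_natCast (R:ℝ) (R+1)]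
            push_cast
            ring_nf
          have hA : (0:ℝ) < ((R:ℝ)^(γ:ℝ)) ^ k := by positivity
          have hB : (0:ℝ) < (R:ℝ) ^ (R+1) := by positivity
          have hF : (0:ℝ) < (Nat.factorial R : ℝ) := by positivity
          rw [e2, e1, div_pow]
          field_simp
      _ ≤ ((R:ℝ) ^ (R+1) / Nat.factorial R) * (1/2) ^ k := by
          have hhalf : x / (R:ℝ)^(γ:ℝ) ≤ 1/2 := by
            rw [div_le_div_iff₀ (by positivity) (by norm_num : (0:ℝ) < 2)]
            have : (0:ℝ) < (R:ℝ)^(γ:ℝ) := by positivity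
            nlinarith
          exact mul_le_mul_of_nonneg_left
            (pow_le_pow_left₀ (by positivity) hhalf k) (by positivity)
  rw [← summable_nat_add_iff k0]
  apply Summable.of_nonneg_of_le
    (fun k => by positivity)
    (fun k => hbound (k+k0) (by omega))
  simp_rw [pow_add]
  exact (((summable_geometric_of_lt_one (by norm_num) (by norm_num)).mul_right
    ((1/2:ℝ)^k0)).mul_left _)

private lemma rbeta_integrable {a b τ : ℝ} (ha : 0 < a) (hb : 0 < b) (hτ : 0 < τ) :
    IntervalIntegrable (fun ρ => ρ ^ (a-1) * (τ - ρ) ^ (b-1)) volume 0 τ := by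
  have h2 : (0:ℝ) < τ/2 := by linarith
  apply IntervalIntegrable.trans (b := τ/2)
  · apply IntervalIntegrable.mul_continuousOn
      (intervalIntegral.intervalIntegrable_rpow' (by linarith : (-1:ℝ) < a-1))
    apply ContinuousOn.rpow_const (by fun_prop)
    intro x hx
    rw [Set.uIcc_of_le (by linarith : (0:ℝ) ≤ τ/2)] at hx
    exact Or.inl (by rw [sub_ne_zero]; intro h; rw [← h] at hx; linarith [hx.2])
  · apply IntervalIntegrable.continuousOn_mul (f := fun ρ => (τ - ρ) ^ (b-1))
    · have := (intervalIntegral.intervalIntegrable_rpow' (a := 0) (b := τ/2)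
        (by linarith : (-1:ℝ) < b-1)).comp_sub_left τ
      simpa [show τ - τ/2 = τ/2 by ring] using this.symm
    · apply ContinuousOn.rpow_const (by fun_prop)
      intro x hx
      rw [Set.uIcc_of_le (by linarith : τ/2 ≤ τ)] at hx
      exact Or.inl (ne_of_gt (lt_of_lt_of_le h2 hx.1))

private lemma rbeta_eval {a b τ : ℝ} (ha : 0 < a) (hb : 0 < b) (hτ : 0 < τ) :
    ∫ ρ in (0:ℝ)..τ, ρ ^ (a-1) * (τ - ρ) ^ (b-1)
      = Real.Gamma a * Real.Gamma b / Real.Gamma (a+b) * τ ^ (a+b-1) := by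
  have hsca := Complex.betaIntegral_scaled (a : ℂ) (b : ℂ) hτ
  have hbeta := Complex.Gamma_mul_Gamma_eq_betaIntegral
    (show 0 < (a:ℂ).re by simpa using ha) (show 0 < (b:ℂ).re by simpa using hb)
  have hΓab : Complex.Gamma ((a:ℂ) + (b:ℂ)) ≠ 0 := by
    rw [show (a:ℂ) + (b:ℂ) = ((a+b : ℝ) : ℂ) by push_cast; ring, Complex.Gamma_ofReal]
    exact_mod_cast (Real.Gamma_pos_of_pos (by linarith)).ne'
  have hbval : Complex.betaIntegral (a:ℂ) (b:ℂ)
      = Complex.Gamma (a:ℂ) * Complex.Gamma (b:ℂ) / Complex.Gamma ((a:ℂ)+(b:ℂ)) := by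
    field_simp; linear_combination -hbeta
  have hlhs : (∫ x in (0:ℝ)..τ, (x : ℂ) ^ ((a:ℂ) - 1) * ((τ:ℂ) - x) ^ ((b:ℂ) - 1))
      = ((∫ ρ in (0:ℝ)..τ, ρ ^ (a-1) * (τ - ρ) ^ (b-1) : ℝ) : ℂ) := by
    rw [← intervalIntegral.integral_ofReal]
    apply intervalIntegral.integral_congr
    intro x hx
    rw [Set.uIcc_of_le hτ.le] at hx
    push_cast
    rw [Complex.ofReal_cpow hx.1, Complex.ofReal_cpow (by linarith [hx.2] : (0:ℝ) ≤ τ - x)]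
    push_cast
    ring
  rw [hlhs, hbval] at hsca
  have hrhs : ((τ:ℂ)) ^ ((a:ℂ) + (b:ℂ) - 1) = ((τ ^ (a+b-1) : ℝ) : ℂ) := by
    rw [Complex.ofReal_cpow hτ.le]
    push_cast
    ring_nf
  rw [hrhs] at hsca
  have : ((∫ ρ in (0:ℝ)..τ, ρ ^ (a-1) * (τ - ρ) ^ (b-1) : ℝ) : ℂ)
      = ((Real.Gamma a * Real.Gamma b / Real.Gamma (a+b) * τ ^ (a+b-1) : ℝ) : ℂ) := by
    rw [hsca]
    rw [show (a:ℂ) + (b:ℂ) = ((a+b : ℝ) : ℂ) by push_cast; ring]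
    rw [Complex.Gamma_ofReal, Complex.Gamma_ofReal, Complex.Gamma_ofReal]
    push_cast
    ring
  exact_mod_cast this

private lemma gamma_arg_pos' (γ : ℝ) (hγ0 : 0 < γ) (k : ℕ) : 0 < Real.Gamma ((k : ℝ) * γ + 1) :=
  Real.Gamma_pos_of_pos (by positivity)

private lemma ml_summable_mul (γ : ℝ) (hγ0 : 0 < γ) (x : ℝ) (hx : 0 ≤ x) :
    Summable (fun k : ℕ => (k:ℝ) * x ^ k / Real.Gamma ((k : ℝ) * γ + 1)) := by
  apply Summable.of_nonneg_of_le
    (fun k => by positivity)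
    (fun k => ?_) (ml_summable γ hγ0 (2*x) (by linarith))
  have h1 : (k:ℝ) * x ^ k ≤ (2*x)^k := by
    rw [mul_pow]
    apply mul_le_mul_of_nonneg_right _ (by positivity)
    exact_mod_cast (Nat.lt_two_pow_self (n := k)) |>.le
  exact div_le_div_of_nonneg_right h1 (gamma_arg_pos' γ hγ0 k).le |>.trans (le_refl _)

private lemma rpow_interval_bound {a b x e : ℝ} (ha : 0 < a) (hx : x ∈ Set.Icc a b) :
    x ^ e ≤ a ^ e + b ^ e := by
  have hxa : 0 < x := lt_of_lt_of_le ha hx.1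
  have hb : 0 < b := lt_of_lt_of_le hxa hx.2
  rcases le_or_gt 0 e with he | he
  · have := Real.rpow_le_rpow hxa.le hx.2 he
    have : x ^ e ≤ b ^ e := this
    nlinarith [Real.rpow_nonneg ha.le e]
  · have : x ^ e ≤ a ^ e := Real.rpow_le_rpow_of_nonpos ha hx.1 he.le
    nlinarith [Real.rpow_nonneg hb.le e]

private lemma deriv_S (γ C K : ℝ) (hγ0 : 0 < γ) (hC : 0 < C) (hK : 0 < K) (q : ℕ → ℝ)
    (hq : ∀ k, |q k| ≤ C * K ^ k) {ρ : ℝ} (hρ : 0 < ρ) :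
    HasDerivAt (fun τ => ∑' k : ℕ, q k * τ ^ ((k:ℝ)*γ) / Real.Gamma ((k:ℝ)*γ+1))
      (∑' k : ℕ, q k * (((k:ℝ)*γ) * ρ ^ ((k:ℝ)*γ-1)) / Real.Gamma ((k:ℝ)*γ+1)) ρ := by
  set a := ρ/2 with hadef
  set b := ρ+1 with hbdef
  have ha : 0 < a := by positivity
  have hb : 0 < b := by positivity
  have hab : a ≤ b := by rw [hadef, hbdef]; linarith
  set u : ℕ → ℝ :=
    fun k => (γ*(1/a+1/b)*C) * ((k:ℝ) * (K*b^(γ:ℝ))^k / Real.Gamma ((k:ℝ)*γ+1)) with hu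
  have hu_sum : Summable u := (ml_summable_mul γ hγ0 (K*b^(γ:ℝ)) (by positivity)).mul_left _
  have hFbound : ∀ (k : ℕ) (x : ℝ), x ∈ Set.Ioo a b →
      ‖q k * (((k:ℝ)*γ) * x ^ ((k:ℝ)*γ-1)) / Real.Gamma ((k:ℝ)*γ+1)‖ ≤ u k := by
    intro k x hx
    have hxmem : x ∈ Set.Icc a b := ⟨hx.1.le, hx.2.le⟩
    have hx0 : 0 < x := lt_of_lt_of_le ha hxmem.1
    have hΓ := gamma_arg_pos' γ hγ0 k
    have hxe : x ^ ((k:ℝ)*γ-1) ≤ (1/a+1/b) * b ^ ((k:ℝ)*γ) := by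
      have h1 : x ^ ((k:ℝ)*γ-1) ≤ a ^ ((k:ℝ)*γ-1) + b ^ ((k:ℝ)*γ-1) :=
        rpow_interval_bound ha hxmem
      have h2 : a ^ ((k:ℝ)*γ-1) = a ^ ((k:ℝ)*γ) / a := by
        rw [Real.rpow_sub ha, Real.rpow_one]
      have h3 : b ^ ((k:ℝ)*γ-1) = b ^ ((k:ℝ)*γ) / b := by
        rw [Real.rpow_sub hb, Real.rpow_one]
      have h4 : a ^ ((k:ℝ)*γ) ≤ b ^ ((k:ℝ)*γ) := Real.rpow_le_rpow ha.le hab (by positivity)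
      rw [h2, h3] at h1
      have h5 : a ^ ((k:ℝ)*γ) / a ≤ b ^ ((k:ℝ)*γ) / a := by
        apply div_le_div_of_nonneg_right h4 ha.le |>.trans (le_refl _)
      calc x ^ ((k:ℝ)*γ-1) ≤ b ^ ((k:ℝ)*γ)/a + b ^ ((k:ℝ)*γ)/b := by linarith
      _ = (1/a+1/b) * b ^ ((k:ℝ)*γ) := by ring
    have hbk : b ^ ((k:ℝ)*γ) = (b^(γ:ℝ))^k := by
      rw [mul_comm, Real.rpow_mul_natCast hb.le]
    rw [Real.norm_eq_abs, abs_div, abs_of_pos hΓ, abs_mul]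
    rw [abs_of_nonneg (by positivity : (0:ℝ) ≤ ((k:ℝ)*γ) * x ^ ((k:ℝ)*γ-1))]
    rw [hu]
    have key : |q k| * (((k:ℝ)*γ) * x ^ ((k:ℝ)*γ-1))
        ≤ (γ*(1/a+1/b)*C) * ((k:ℝ) * (K*b^(γ:ℝ))^k) := by
      calc |q k| * (((k:ℝ)*γ) * x ^ ((k:ℝ)*γ-1))
          ≤ (C * K^k) * (((k:ℝ)*γ) * ((1/a+1/b) * b ^ ((k:ℝ)*γ))) := by
            apply mul_le_mul (hq k) _ (by positivity) (by positivity)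
            apply mul_le_mul_of_nonneg_left hxe (by positivity)
        _ = (γ*(1/a+1/b)*C) * ((k:ℝ) * (K^k*(b^(γ:ℝ))^k)) := by rw [hbk]; ring
        _ = (γ*(1/a+1/b)*C) * ((k:ℝ) * (K*b^(γ:ℝ))^k) := by rw [mul_pow]
    exact div_le_div_of_nonneg_right key hΓ.le |>.trans (by rw [mul_div_assoc])
  have hterm : ∀ (k : ℕ) (x : ℝ), x ≠ 0 →
      HasDerivAt (fun τ => q k * τ ^ ((k:ℝ)*γ) / Real.Gamma ((k:ℝ)*γ+1))
        (q k * (((k:ℝ)*γ) * x ^ ((k:ℝ)*γ-1)) / Real.Gamma ((k:ℝ)*γ+1)) x := by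
    intro k x hx
    exact ((Real.hasDerivAt_rpow_const (Or.inl hx)).const_mul (q k)).div_const _
  have hsummand : ∀ x : ℝ, 0 ≤ x →
      Summable (fun k : ℕ => q k * x ^ ((k:ℝ)*γ) / Real.Gamma ((k:ℝ)*γ+1)) := by
    intro x hx0
    apply Summable.of_abs
    apply Summable.of_nonneg_of_le (fun k => abs_nonneg _) (fun k => ?_)
      ((ml_summable γ hγ0 (K*x^(γ:ℝ)) (by positivity)).mul_left C)
    rw [abs_div, abs_of_pos (gamma_arg_pos' γ hγ0 k), abs_mul,
      abs_of_nonneg (Real.rpow_nonneg hx0 _)]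
    have : |q k| * x ^ ((k:ℝ)*γ) ≤ C * (K*x^(γ:ℝ))^k := by
      rw [mul_pow, show x ^ ((k:ℝ)*γ) = (x^(γ:ℝ))^k by rw [mul_comm, Real.rpow_mul_natCast hx0]]
      calc |q k| * (x^(γ:ℝ))^k ≤ (C * K^k) * (x^(γ:ℝ))^k :=
            mul_le_mul_of_nonneg_right (hq k) (by positivity)
      _ = C * (K^k * (x^(γ:ℝ))^k) := by ring
    calc |q k| * x ^ ((k:ℝ)*γ) / Real.Gamma ((k:ℝ)*γ+1)
        ≤ C * (K*x^(γ:ℝ))^k / Real.Gamma ((k:ℝ)*γ+1) :=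
          div_le_div_of_nonneg_right this (gamma_arg_pos' γ hγ0 k).le |>.trans (le_refl _)
      _ = C * ((K*x^(γ:ℝ))^k / Real.Gamma ((k:ℝ)*γ+1)) := by rw [mul_div_assoc]
  have hmem : ρ ∈ Set.Ioo a b := by
    constructor
    · rw [hadef]; linarith
    · rw [hbdef]; linarith
  exact hasDerivAt_of_tendstoUniformlyOn (isOpen_Ioo (a := a) (b := b))
    (tendstoUniformlyOn_tsum_nat hu_sum hFbound)
    (Eventually.of_forall fun N x hx =>
      HasDerivAt.fun_sum fun k _ => hterm k x (ne_of_gt (lt_of_lt_of_le ha hx.1.le)))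
    (fun x hx => ((hsummand x (le_of_lt (lt_of_lt_of_le ha hx.1.le))).hasSum).tendsto_sum_nat)
    hmem

private lemma summable_deriv_terms (γ C K : ℝ) (hγ0 : 0 < γ) (hC : 0 < C) (hK : 0 < K)
    (q : ℕ → ℝ) (hq : ∀ k, |q k| ≤ C * K ^ k) {ρ : ℝ} (hρ : 0 < ρ) :
    Summable (fun k : ℕ => q k * (((k:ℝ)*γ) * ρ ^ ((k:ℝ)*γ-1)) / Real.Gamma ((k:ℝ)*γ+1)) := by
  apply Summable.of_abs
  apply Summable.of_nonneg_of_le (fun k => abs_nonneg _) (fun k => ?_)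
    ((ml_summable_mul γ hγ0 (K*ρ^(γ:ℝ)) (by positivity)).mul_left (γ*C/ρ))
  have hΓ := gamma_arg_pos' γ hγ0 k
  rw [abs_div, abs_of_pos hΓ, abs_mul,
    abs_of_nonneg (by positivity : (0:ℝ) ≤ ((k:ℝ)*γ) * ρ ^ ((k:ℝ)*γ-1))]
  have hρk : ρ ^ ((k:ℝ)*γ-1) = (ρ^(γ:ℝ))^k / ρ := by
    rw [Real.rpow_sub hρ, Real.rpow_one, mul_comm, Real.rpow_mul_natCast hρ.le]
  have key : |q k| * (((k:ℝ)*γ) * ρ ^ ((k:ℝ)*γ-1)) ≤ (γ*C/ρ) * ((k:ℝ) * (K*ρ^(γ:ℝ))^k) := by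
    rw [hρk, mul_pow]
    calc |q k| * (((k:ℝ)*γ) * ((ρ^(γ:ℝ))^k / ρ))
        ≤ (C*K^k) * (((k:ℝ)*γ) * ((ρ^(γ:ℝ))^k / ρ)) :=
          mul_le_mul_of_nonneg_right (hq k) (by positivity)
      _ = (γ*C/ρ) * ((k:ℝ) * (K^k*(ρ^(γ:ℝ))^k)) := by field_simp
  calc |q k| * (((k:ℝ)*γ) * ρ ^ ((k:ℝ)*γ-1)) / Real.Gamma ((k:ℝ)*γ+1)
      ≤ (γ*C/ρ) * ((k:ℝ) * (K*ρ^(γ:ℝ))^k) / Real.Gamma ((k:ℝ)*γ+1) :=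
        div_le_div_of_nonneg_right key hΓ.le |>.trans (le_refl _)
    _ = (γ*C/ρ) * ((k:ℝ) * (K*ρ^(γ:ℝ))^k / Real.Gamma ((k:ℝ)*γ+1)) := by rw [mul_div_assoc]

private lemma caputo_step (γ C K : ℝ) (hγ0 : 0 < γ) (hγ1 : γ < 1) (hC : 0 < C) (hK : 0 < K)
    (q : ℕ → ℝ) (hq : ∀ k, |q k| ≤ C * K ^ k) (g : ℝ → ℝ)
    (hg : ∀ τ : ℝ, 0 < τ → g τ = ∑' k : ℕ, q k * τ ^ ((k:ℝ)*γ) / Real.Gamma ((k:ℝ)*γ+1)) :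
    ∀ τ : ℝ, 0 < τ →
      caputo γ g τ = ∑' k : ℕ, q (k+1) * τ ^ ((k:ℝ)*γ) / Real.Gamma ((k:ℝ)*γ+1) := by
  intro τ hτ
  have hγ1' : (0:ℝ) < 1 - γ := by linarith
  have hΓγ : (0:ℝ) < Real.Gamma (1-γ) := Real.Gamma_pos_of_pos hγ1'
  -- the derivative of g on (0, ∞)
  have hDW : ∀ ρ : ℝ, 0 < ρ → derivWithin g (Set.Ici 0) ρ
      = ∑' k : ℕ, q k * (((k:ℝ)*γ) * ρ ^ ((k:ℝ)*γ-1)) / Real.Gamma ((k:ℝ)*γ+1) := by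
    intro ρ hρ
    have hd := deriv_S γ C K hγ0 hC hK q hq hρ
    have hev : g =ᶠ[nhds ρ]
        (fun τ => ∑' k : ℕ, q k * τ ^ ((k:ℝ)*γ) / Real.Gamma ((k:ℝ)*γ+1)) :=
      eventuallyEq_of_mem (isOpen_Ioi.mem_nhds hρ) (fun x hx => hg x hx)
    have hg' : HasDerivAt g _ ρ := hd.congr_of_eventuallyEq hev
    exact hg'.hasDerivWithinAt.derivWithin (uniqueDiffOn_Ici 0 ρ (Set.mem_Ici.2 hρ.le))
  -- integrand rewriting
  set c : ℕ → ℝ := fun k => q (k+1) * ((((k:ℝ)+1)*γ)) / Real.Gamma (((k:ℝ)+1)*γ+1) with hc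
  set F : ℕ → ℝ → ℝ :=
    fun k ρ => c k * (ρ ^ (((k:ℝ)+1)*γ-1) * (τ - ρ) ^ (-γ:ℝ)) with hF
  have hsum_shift : ∀ ρ : ℝ, 0 < ρ →
      (∑' k : ℕ, q k * (((k:ℝ)*γ) * ρ ^ ((k:ℝ)*γ-1)) / Real.Gamma ((k:ℝ)*γ+1))
        = ∑' k : ℕ, q (k+1) * ((((k:ℝ)+1)*γ) * ρ ^ (((k:ℝ)+1)*γ-1)) / Real.Gamma (((k:ℝ)+1)*γ+1) := by
    intro ρ hρ
    rw [Summable.tsum_eq_zero_add (summable_deriv_terms γ C K hγ0 hC hK q hq hρ)]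
    simp only [Nat.cast_zero, zero_mul, mul_zero, zero_div, mul_zero, zero_mul, zero_add]
    apply tsum_congr
    intro k
    push_cast
    ring_nf
  -- each F k is integrable on Ioc 0 τ
  have hFint : ∀ k : ℕ, IntegrableOn (F k) (Set.Ioc 0 τ) volume := by
    intro k
    have ha : (0:ℝ) < ((k:ℝ)+1)*γ := by positivity
    have h1 := (rbeta_integrable (a := ((k:ℝ)+1)*γ) (b := 1-γ) ha hγ1' hτ).const_mul (c k)
    rw [intervalIntegrable_iff_integrableOn_Ioc_of_le hτ.le] at h1
    have : (1:ℝ) - γ - 1 = -γ := by ring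
    rw [this] at h1
    exact h1
  -- value of the integral of F k
  have hFval : ∀ k : ℕ, ∫ ρ in (0:ℝ)..τ, F k ρ
      = Real.Gamma (1-γ) * (q (k+1) * τ ^ ((k:ℝ)*γ) / Real.Gamma ((k:ℝ)*γ+1)) := by
    intro k
    have ha : (0:ℝ) < ((k:ℝ)+1)*γ := by positivity
    have hΓa : (0:ℝ) < Real.Gamma (((k:ℝ)+1)*γ) := Real.Gamma_pos_of_pos ha
    have heval := rbeta_eval (a := ((k:ℝ)+1)*γ) (b := 1-γ) ha hγ1' hτ
    have e1 : (1:ℝ) - γ - 1 = -γ := by ring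
    have e2 : ((k:ℝ)+1)*γ + (1-γ) = (k:ℝ)*γ+1 := by ring
    have e3 : ((k:ℝ)+1)*γ + (1-γ) - 1 = (k:ℝ)*γ := by ring
    rw [e1, e3, e2] at heval
    have hΓa1 : Real.Gamma (((k:ℝ)+1)*γ+1) = (((k:ℝ)+1)*γ) * Real.Gamma (((k:ℝ)+1)*γ) :=
      Real.Gamma_add_one ha.ne'
    simp only [hF, intervalIntegral.integral_const_mul, heval, hc, hΓa1]
    have hΓk := gamma_arg_pos' γ hγ0 k
    field_simp
  -- the norm integrals
  have hFnorm : ∀ k : ℕ, (∫ ρ in Set.Ioc (0:ℝ) τ, ‖F k ρ‖)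
      = |c k| * ∫ ρ in (0:ℝ)..τ, ρ ^ (((k:ℝ)+1)*γ-1) * (τ - ρ) ^ (-γ:ℝ) := by
    intro k
    rw [intervalIntegral.integral_of_le hτ.le, ← integral_const_mul]
    apply setIntegral_congr_fun measurableSet_Ioc
    intro ρ hρ
    have h1 : (0:ℝ) ≤ ρ ^ (((k:ℝ)+1)*γ-1) := Real.rpow_nonneg hρ.1.le _
    have h2 : (0:ℝ) ≤ (τ - ρ) ^ (-γ:ℝ) := Real.rpow_nonneg (by linarith [hρ.2]) _
    simp only [hF, Real.norm_eq_abs, abs_mul, abs_of_nonneg h1, abs_of_nonneg h2]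
  -- exact value of the norm integrals
  have hInn : ∀ k : ℕ, (∫ ρ in Set.Ioc (0:ℝ) τ, ‖F k ρ‖)
      = Real.Gamma (1-γ) * (|q (k+1)| * τ ^ ((k:ℝ)*γ) / Real.Gamma ((k:ℝ)*γ+1)) := by
    intro k
    have hI : (0:ℝ) ≤ ∫ ρ in (0:ℝ)..τ, ρ ^ (((k:ℝ)+1)*γ-1) * (τ - ρ) ^ (-γ:ℝ) := by
      apply intervalIntegral.integral_nonneg hτ.le
      intro x hx
      exact mul_nonneg (Real.rpow_nonneg hx.1 _) (Real.rpow_nonneg (by linarith [hx.2]) _)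
    have habs : |c k| * (∫ ρ in (0:ℝ)..τ, ρ ^ (((k:ℝ)+1)*γ-1) * (τ - ρ) ^ (-γ:ℝ))
        = |c k * ∫ ρ in (0:ℝ)..τ, ρ ^ (((k:ℝ)+1)*γ-1) * (τ - ρ) ^ (-γ:ℝ)| := by
      rw [abs_mul, abs_of_nonneg hI]
    have hcv : c k * (∫ ρ in (0:ℝ)..τ, ρ ^ (((k:ℝ)+1)*γ-1) * (τ - ρ) ^ (-γ:ℝ))
        = Real.Gamma (1-γ) * (q (k+1) * τ ^ ((k:ℝ)*γ) / Real.Gamma ((k:ℝ)*γ+1)) := by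
      rw [← hFval k]
      simp only [hF, intervalIntegral.integral_const_mul]
    rw [hFnorm k, habs, hcv, abs_mul, abs_div, abs_mul,
      abs_of_pos hΓγ, abs_of_pos (gamma_arg_pos' γ hγ0 k),
      abs_of_nonneg (Real.rpow_nonneg hτ.le _)]
  -- summability of the norm integrals
  have hFnorm_sum : Summable (fun k : ℕ => ∫ ρ in Set.Ioc (0:ℝ) τ, ‖F k ρ‖) := by
    simp_rw [hInn]
    apply Summable.of_nonneg_of_le (fun k => ?_) (fun k => ?_)
      ((ml_summable γ hγ0 (K*τ^(γ:ℝ)) (by positivity)).mul_left (Real.Gamma (1-γ)*(C*K)))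
    · have := gamma_arg_pos' γ hγ0 k
      positivity
    · have hΓk := gamma_arg_pos' γ hγ0 k
      have hτk : τ ^ ((k:ℝ)*γ) = (τ^(γ:ℝ))^k := by
        rw [mul_comm, Real.rpow_mul_natCast hτ.le]
      have : |q (k+1)| * τ ^ ((k:ℝ)*γ) ≤ (C*K) * (K*τ^(γ:ℝ))^k := by
        calc |q (k+1)| * τ ^ ((k:ℝ)*γ) ≤ (C * K^(k+1)) * τ ^ ((k:ℝ)*γ) :=
              mul_le_mul_of_nonneg_right (hq (k+1)) (Real.rpow_nonneg hτ.le _)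
          _ = (C*K) * (K*τ^(γ:ℝ))^k := by rw [hτk, mul_pow, pow_succ]; ring
      calc Real.Gamma (1-γ) * (|q (k+1)| * τ ^ ((k:ℝ)*γ) / Real.Gamma ((k:ℝ)*γ+1))
          ≤ Real.Gamma (1-γ) * ((C*K) * (K*τ^(γ:ℝ))^k / Real.Gamma ((k:ℝ)*γ+1)) := by
            apply mul_le_mul_of_nonneg_left _ hΓγ.le
            exact div_le_div_of_nonneg_right this hΓk.le |>.trans (le_refl _)
        _ = Real.Gamma (1-γ)*(C*K) * ((K*τ^(γ:ℝ))^k / Real.Gamma ((k:ℝ)*γ+1)) := by ring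
  -- swap sum and integral
  have hswap := MeasureTheory.integral_tsum_of_summable_integral_norm
    (μ := volume.restrict (Set.Ioc (0:ℝ) τ)) (F := F) hFint hFnorm_sum
  -- put everything together
  have hint_eq : (∫ ρ in (0:ℝ)..τ, derivWithin g (Set.Ici 0) ρ * (τ - ρ) ^ (-γ:ℝ))
      = ∑' k : ℕ, ∫ ρ in Set.Ioc (0:ℝ) τ, F k ρ := by
    rw [intervalIntegral.integral_of_le hτ.le, hswap]
    apply setIntegral_congr_fun measurableSet_Ioc
    intro ρ hρ
    dsimp only
    rw [hDW ρ hρ.1, hsum_shift ρ hρ.1, ← tsum_mul_right]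
    apply tsum_congr
    intro k
    simp only [hF, hc]
    ring
  rw [caputo, hint_eq]
  have : ∀ k : ℕ, (∫ ρ in Set.Ioc (0:ℝ) τ, F k ρ)
      = Real.Gamma (1-γ) * (q (k+1) * τ ^ ((k:ℝ)*γ) / Real.Gamma ((k:ℝ)*γ+1)) := by
    intro k
    rw [← intervalIntegral.integral_of_le hτ.le, hFval k]
  simp_rw [this]
  rw [tsum_mul_left, ← mul_assoc, one_div, inv_mul_cancel₀ hΓγ.ne', one_mul]

private lemma summable_S (γ C K : ℝ) (hγ0 : 0 < γ) (hC : 0 < C) (hK : 0 < K)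
    (q : ℕ → ℝ) (hq : ∀ k, |q k| ≤ C * K ^ k) {x : ℝ} (hx0 : 0 ≤ x) :
    Summable (fun k : ℕ => q k * x ^ ((k:ℝ)*γ) / Real.Gamma ((k:ℝ)*γ+1)) := by
  apply Summable.of_abs
  apply Summable.of_nonneg_of_le (fun k => abs_nonneg _) (fun k => ?_)
    ((ml_summable γ hγ0 (K*x^(γ:ℝ)) (by positivity)).mul_left C)
  rw [abs_div, abs_of_pos (gamma_arg_pos' γ hγ0 k), abs_mul,
    abs_of_nonneg (Real.rpow_nonneg hx0 _)]
  have : |q k| * x ^ ((k:ℝ)*γ) ≤ C * (K*x^(γ:ℝ))^k := by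
    rw [mul_pow, show x ^ ((k:ℝ)*γ) = (x^(γ:ℝ))^k by rw [mul_comm, Real.rpow_mul_natCast hx0]]
    calc |q k| * (x^(γ:ℝ))^k ≤ (C * K^k) * (x^(γ:ℝ))^k :=
          mul_le_mul_of_nonneg_right (hq k) (by positivity)
    _ = C * (K^k * (x^(γ:ℝ))^k) := by ring
  calc |q k| * x ^ ((k:ℝ)*γ) / Real.Gamma ((k:ℝ)*γ+1)
      ≤ C * (K*x^(γ:ℝ))^k / Real.Gamma ((k:ℝ)*γ+1) :=
        div_le_div_of_nonneg_right this (gamma_arg_pos' γ hγ0 k).le |>.trans (le_refl _)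
    _ = C * ((K*x^(γ:ℝ))^k / Real.Gamma ((k:ℝ)*γ+1)) := by rw [mul_div_assoc]

private lemma tendsto_S (γ C K : ℝ) (hγ0 : 0 < γ) (hC : 0 < C) (hK : 0 < K)
    (q : ℕ → ℝ) (hq : ∀ k, |q k| ≤ C * K ^ k) :
    Tendsto (fun τ : ℝ => ∑' k : ℕ, q k * τ ^ ((k:ℝ)*γ) / Real.Gamma ((k:ℝ)*γ+1))
      (nhdsWithin 0 (Set.Ioi 0)) (nhds (q 0)) := by
  set W : ℕ → ℝ := fun k => C * K^k / Real.Gamma ((k:ℝ)*γ+1) with hW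
  have hWsum : Summable W := by
    have := (ml_summable γ hγ0 K hK.le).mul_left C
    simpa [hW, mul_div_assoc] using this
  have hWsum' : Summable (fun k => W (k+1)) := (_root_.summable_nat_add_iff 1).2 hWsum
  set A : ℝ := ∑' k : ℕ, W (k+1) with hA
  have hbound : ∀ τ : ℝ, τ ∈ Set.Ioo (0:ℝ) 1 →
      |(∑' k : ℕ, q k * τ ^ ((k:ℝ)*γ) / Real.Gamma ((k:ℝ)*γ+1)) - q 0| ≤ A * τ^(γ:ℝ) := by
    intro τ hτ
    have hτ0 : (0:ℝ) < τ := hτ.1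
    have hτ1 : τ ≤ 1 := hτ.2.le
    set T : ℕ → ℝ := fun k => q k * τ ^ ((k:ℝ)*γ) / Real.Gamma ((k:ℝ)*γ+1) with hT
    have hsum : Summable T := summable_S γ C K hγ0 hC hK q hq hτ0.le
    have h0 : T 0 = q 0 := by
      simp [hT, Real.Gamma_one]
    rw [Summable.tsum_eq_zero_add hsum, h0, add_sub_cancel_left]
    have hsum' : Summable (fun k => T (k+1)) := (_root_.summable_nat_add_iff 1).2 hsum
    have habs : Summable (fun k : ℕ => |T (k+1)|) := hsum'.abs
    have hterm : ∀ k : ℕ, |T (k+1)| ≤ W (k+1) * τ^(γ:ℝ) := by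
      intro k
      have hΓ := gamma_arg_pos' γ hγ0 (k+1)
      rw [hT]
      simp only
      rw [abs_div, abs_of_pos hΓ, abs_mul, abs_of_nonneg (Real.rpow_nonneg hτ0.le _)]
      rw [show τ ^ ((((k+1):ℕ):ℝ)*γ) = τ ^ ((k:ℝ)*γ) * τ^(γ:ℝ) by
        rw [show (((k+1):ℕ):ℝ)*γ = (k:ℝ)*γ + γ by push_cast; ring, Real.rpow_add hτ0]]
      have hle1 : τ ^ ((k:ℝ)*γ) ≤ 1 := Real.rpow_le_one hτ0.le hτ1 (by positivity)
      have key : |q (k+1)| * (τ ^ ((k:ℝ)*γ) * τ^(γ:ℝ)) ≤ (C*K^(k+1)) * τ^(γ:ℝ) := by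
        calc |q (k+1)| * (τ ^ ((k:ℝ)*γ) * τ^(γ:ℝ))
            ≤ (C*K^(k+1)) * (τ ^ ((k:ℝ)*γ) * τ^(γ:ℝ)) :=
              mul_le_mul_of_nonneg_right (hq (k+1)) (by positivity)
          _ ≤ (C*K^(k+1)) * (1 * τ^(γ:ℝ)) := by
              apply mul_le_mul_of_nonneg_left _ (by positivity)
              exact mul_le_mul_of_nonneg_right hle1 (Real.rpow_nonneg hτ0.le _)
          _ = (C*K^(k+1)) * τ^(γ:ℝ) := by ring
      calc |q (k+1)| * (τ ^ ((k:ℝ)*γ) * τ^(γ:ℝ)) / Real.Gamma ((((k+1):ℕ):ℝ)*γ+1)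
          ≤ (C*K^(k+1)) * τ^(γ:ℝ) / Real.Gamma ((((k+1):ℕ):ℝ)*γ+1) :=
            div_le_div_of_nonneg_right key hΓ.le |>.trans (le_refl _)
        _ = W (k+1) * τ^(γ:ℝ) := by rw [hW]; ring
    have h1 : |∑' k : ℕ, T (k+1)| ≤ ∑' k : ℕ, |T (k+1)| := by
      simpa [Real.norm_eq_abs] using
        norm_tsum_le_tsum_norm (f := fun k : ℕ => T (k+1)) (by simpa [Real.norm_eq_abs] using habs)
    have h2 : (∑' k : ℕ, |T (k+1)|) ≤ ∑' k : ℕ, W (k+1) * τ^(γ:ℝ) :=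
      Summable.tsum_le_tsum hterm habs (hWsum'.mul_right _)
    have h3 : (∑' k : ℕ, W (k+1) * τ^(γ:ℝ)) = A * τ^(γ:ℝ) := tsum_mul_right
    linarith
  rw [← tendsto_sub_nhds_zero_iff]
  have hg : Tendsto (fun τ : ℝ => A * τ^(γ:ℝ)) (nhdsWithin 0 (Set.Ioi 0)) (nhds 0) := by
    have hc : ContinuousAt (fun τ:ℝ => τ^(γ:ℝ)) 0 :=
      Real.continuousAt_rpow_const 0 γ (Or.inr hγ0.le)
    have := (hc.tendsto.mono_left
      (nhdsWithin_le_nhds (s := Set.Ioi (0:ℝ)))).const_mul A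
    rwa [Real.zero_rpow hγ0.ne', mul_zero] at this
  apply squeeze_zero_norm' _ hg
  filter_upwards [Ioo_mem_nhdsGT one_pos] with τ hτ
  simpa [Real.norm_eq_abs] using hbound τ hτ


/-- Iterated Caputo derivatives of a fractional power series: if `|pₙ| ≤ C Kⁿ` and
`f(τ) = Σ pₙ τ^{nγ}/Γ(nγ+1)` for `τ ≥ 0`, then for every `n` the `n`-fold iterated
Caputo derivative `D^{nγ} f` equals `Σ_k p_{n+k} τ^{kγ}/Γ(kγ+1)` on `(0,∞)` and tends
to `pₙ` as `τ → 0⁺`. -/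
theorem iterated_caputo_fps (γ C K : ℝ) (hγ0 : 0 < γ) (hγ1 : γ < 1) (hC : 0 < C) (hK : 0 < K)
    (p : ℕ → ℝ) (hp : ∀ n : ℕ, |p n| ≤ C * K ^ n) (f : ℝ → ℝ)
    (hf : ∀ τ : ℝ, 0 ≤ τ →
      f τ = ∑' n : ℕ, p n * τ ^ ((n : ℝ) * γ) / Real.Gamma ((n : ℝ) * γ + 1)) :
    ∀ n : ℕ,
      (∀ τ : ℝ, 0 < τ →
        ((caputo γ)^[n] f) τ
          = ∑' k : ℕ, p (n + k) * τ ^ ((k : ℝ) * γ) / Real.Gamma ((k : ℝ) * γ + 1)) ∧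
      Tendsto ((caputo γ)^[n] f) (nhdsWithin 0 (Set.Ioi 0)) (nhds (p n)) := by
  have hqbound : ∀ n : ℕ, ∀ k : ℕ, |p (n + k)| ≤ (C * K ^ n) * K ^ k := by
    intro n k
    calc |p (n + k)| ≤ C * K ^ (n + k) := hp (n + k)
      _ = (C * K ^ n) * K ^ k := by rw [pow_add]; ring
  have main : ∀ n : ℕ, ∀ τ : ℝ, 0 < τ → ((caputo γ)^[n] f) τ
      = ∑' k : ℕ, p (n + k) * τ ^ ((k : ℝ) * γ) / Real.Gamma ((k : ℝ) * γ + 1) := by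
    intro n
    induction n with
    | zero =>
      intro τ hτ
      simpa using hf τ hτ.le
    | succ n ih =>
      intro τ hτ
      rw [Function.iterate_succ_apply']
      have hstep := caputo_step γ (C * K ^ n) K hγ0 hγ1 (by positivity) hK
        (fun k => p (n + k)) (hqbound n) ((caputo γ)^[n] f) ih τ hτ
      rw [hstep]
      exact tsum_congr fun k => by rw [show n + (k + 1) = n + 1 + k by omega]
  intro n
  refine ⟨main n, ?_⟩
  have htS := tendsto_S γ (C * K ^ n) K hγ0 (by positivity) hK
    (fun k => p (n + k)) (hqbound n)
  simp only [Nat.add_zero] at htS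
  apply htS.congr'
  filter_upwards [self_mem_nhdsWithin] with τ hτ
  exact (main n τ hτ).symm
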